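/- Program equivalences for while loops via relational semantics: for any test b (predicate on states) and relation x (semantics of the loop body), ([b];(([b];x)*;[¬b]))*;[¬b] = ([b];x)*;[¬b] (nested while loops collapse), and ([b];(x;([b];x + [¬b];1)))*;[¬b] = ([b];x)*;[¬b] (loop folding), where ; is relational composition, * is reflexive transitive closure, [b] is the subidentity relation of b, and 1 is the identity relation. -/

import Mathlib

/-- Relational composition. -/
def relComp {S : Type*} (x y : Set (S × S)) : Set (S × S) :=
  {p | ∃ r, (p.1, r) ∈ x ∧ (r, p.2) ∈ y}

/-- Reflexive transitive closure of a relation, as a set of pairs. -/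
def relStar {S : Type*} (x : Set (S × S)) : Set (S × S) :=
  {p | Relation.ReflTransGen (fun a b => (a, b) ∈ x) p.1 p.2}

/-- Embedding of a decidable predicate as a subidentity relation. -/
def relTest {S : Type*} (b : S → Bool) : Set (S × S) :=
  {p | p.1 = p.2 ∧ b p.1 = true}

/-- The identity relation. -/
def relId (S : Type*) : Set (S × S) := {p | p.1 = p.2}

namespace WhileAux

variable {S : Type*} (b : S → Bool) (x : Set (S × S))

/-- One iteration of the while loop: test then body. -/
def st1 (a c : S) : Prop := b a = true ∧ (a, c) ∈ x

lemma mem_bx {a c : S} : (a, c) ∈ relComp (relTest b) x ↔ st1 b x a c := by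
  simp only [relComp, relTest, Set.mem_setOf_eq, st1]
  constructor
  · rintro ⟨r, ⟨rfl, hb⟩, hx⟩; exact ⟨hb, hx⟩
  · rintro ⟨hb, hx⟩; exact ⟨a, ⟨rfl, hb⟩, hx⟩

/-- Characterization of `(star u) ; [¬b]`. -/
lemma mem_loop {u : Set (S × S)} {a c : S} :
    (a, c) ∈ relComp (relStar u) (relTest (fun s => !b s)) ↔
      Relation.ReflTransGen (fun p q => (p, q) ∈ u) a c ∧ b c = false := by
  simp only [relComp, relStar, relTest, Set.mem_setOf_eq]
  constructor
  · rintro ⟨r, hs, rfl, hnb⟩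
    exact ⟨hs, by simpa using hnb⟩
  · rintro ⟨hs, hnb⟩
    exact ⟨c, hs, rfl, by simpa using hnb⟩

/-- If `b a = false`, a `st1`-chain from `a` is trivial. -/
lemma chain_stuck {a c : S} (h : Relation.ReflTransGen (st1 b x) a c) (hb : b a = false) :
    a = c := by
  rcases h.cases_head with rfl | ⟨r, ⟨hba, _⟩, _⟩
  · rfl
  · simp [hba] at hb

/-- Step relation for the nested-loop LHS. -/
def st2 (a c : S) : Prop :=
  b a = true ∧ Relation.ReflTransGen (st1 b x) a c ∧ b c = false

lemma part1_forward {a c : S} (h : Relation.ReflTransGen (st2 b x) a c) :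
    Relation.ReflTransGen (st1 b x) a c := by
  induction h with
  | refl => exact .refl
  | tail _ hstep ih => exact ih.trans hstep.2.1

lemma part1_backward {a c : S} (h : Relation.ReflTransGen (st1 b x) a c)
    (hc : b c = false) : Relation.ReflTransGen (st2 b x) a c := by
  cases hba : b a with
  | false => rw [chain_stuck b x h hba]
  | true => exact Relation.ReflTransGen.single ⟨hba, h, hc⟩

/-- Step relation for the loop-folding LHS. -/
def st3 (a c : S) : Prop :=
  b a = true ∧ ∃ r, (a, r) ∈ x ∧ ((b r = true ∧ (r, c) ∈ x) ∨ (b r = false ∧ r = c))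

lemma part2_forward {a c : S} (h : Relation.ReflTransGen (st3 b x) a c) :
    Relation.ReflTransGen (st1 b x) a c := by
  induction h with
  | refl => exact .refl
  | tail _ hstep ih =>
    obtain ⟨hb, r, hxr, hrest⟩ := hstep
    rcases hrest with ⟨hbr, hxc⟩ | ⟨_, rfl⟩
    · exact (ih.tail ⟨hb, hxr⟩).tail ⟨hbr, hxc⟩
    · exact ih.tail ⟨hb, hxr⟩

lemma part2_backward {a c : S} (h : Relation.ReflTransGen (st1 b x) a c)
    (hc : b c = false) : Relation.ReflTransGen (st3 b x) a c := by
  have key : ∀ a, Relation.ReflTransGen (st1 b x) a c →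
      (Relation.ReflTransGen (st3 b x) a c ∧
       ∀ a0, b a0 = true → (a0, a) ∈ x → Relation.ReflTransGen (st3 b x) a0 c) := by
    intro a h
    induction h using Relation.ReflTransGen.head_induction_on with
    | refl =>
      refine ⟨.refl, fun a0 hb0 hx0 => ?_⟩
      exact Relation.ReflTransGen.single ⟨hb0, c, hx0, Or.inr ⟨hc, rfl⟩⟩
    | head hstep _ ih =>
      rename_i a a' _
      obtain ⟨hba, hxa⟩ := hstep
      refine ⟨ih.2 a hba hxa, fun a0 hb0 hx0 => ?_⟩
      exact Relation.ReflTransGen.head ⟨hb0, a, hx0, Or.inl ⟨hba, hxa⟩⟩ ih.1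
  exact (key a h).1

end WhileAux

/-- Program equivalences for while loops via relational semantics:
nested while loops collapse, and loop folding. -/
theorem while_equivalences {S : Type*} (b : S → Bool) (x : Set (S × S)) :
    relComp (relStar (relComp (relTest b)
        (relComp (relStar (relComp (relTest b) x)) (relTest (fun s => !b s)))))
      (relTest (fun s => !b s))
      = relComp (relStar (relComp (relTest b) x)) (relTest (fun s => !b s))
    ∧
    relComp (relStar (relComp (relTest b)
        (relComp x (relComp (relTest b) x ∪ relComp (relTest (fun s => !b s)) (relId S)))))
      (relTest (fun s => !b s))
      = relComp (relStar (relComp (relTest b) x)) (relTest (fun s => !b s)) := by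
  open WhileAux in
  constructor
  · ext ⟨a, c⟩
    rw [mem_loop b, mem_loop b]
    have hbody : ∀ u v : S,
        (u, v) ∈ relComp (relTest b)
          (relComp (relStar (relComp (relTest b) x)) (relTest (fun s => !b s)))
        ↔ st2 b x u v := by
      intro u v
      rw [mem_bx]
      unfold WhileAux.st1 WhileAux.st2
      rw [mem_loop b]
      constructor
      · rintro ⟨hb, hs, hnb⟩
        exact ⟨hb, Relation.ReflTransGen.mono (fun p q h => (mem_bx b x).mp h) _ _ hs, hnb⟩
      · rintro ⟨hb, hs, hnb⟩
        exact ⟨hb, Relation.ReflTransGen.mono (fun p q h => (mem_bx b x).mpr h) _ _ hs, hnb⟩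
    constructor
    · rintro ⟨hs, hnb⟩
      refine ⟨?_, hnb⟩
      have : Relation.ReflTransGen (st2 b x) a c :=
        Relation.ReflTransGen.mono (fun u v h => (hbody u v).mp h) _ _ hs
      exact Relation.ReflTransGen.mono (fun u v h => (mem_bx b x).mpr h) _ _ (part1_forward b x this)
    · rintro ⟨hs, hnb⟩
      refine ⟨?_, hnb⟩
      have hs' : Relation.ReflTransGen (st1 b x) a c :=
        Relation.ReflTransGen.mono (fun u v h => (mem_bx b x).mp h) _ _ hs
      exact Relation.ReflTransGen.mono (fun u v h => (hbody u v).mpr h) _ _ (part1_backward b x hs' hnb)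
  · ext ⟨a, c⟩
    rw [mem_loop b, mem_loop b]
    have hbody : ∀ u v : S,
        (u, v) ∈ relComp (relTest b)
          (relComp x (relComp (relTest b) x ∪ relComp (relTest (fun s => !b s)) (relId S)))
        ↔ st3 b x u v := by
      intro u v
      rw [mem_bx]
      unfold WhileAux.st1 WhileAux.st3
      simp only [relComp, relTest, relId, Set.mem_union, Set.mem_setOf_eq]
      constructor
      · rintro ⟨hb, r, hxr, hrest⟩
        refine ⟨hb, r, hxr, ?_⟩
        rcases hrest with ⟨s, ⟨rfl, hbs⟩, hsx⟩ | ⟨s, ⟨rfl, hnb⟩, rfl⟩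
        · exact Or.inl ⟨hbs, hsx⟩
        · exact Or.inr ⟨by simpa using hnb, rfl⟩
      · rintro ⟨hb, r, hxr, hrest⟩
        refine ⟨hb, r, hxr, ?_⟩
        rcases hrest with ⟨hbr, hxc⟩ | ⟨hnb, rfl⟩
        · exact Or.inl ⟨r, ⟨rfl, hbr⟩, hxc⟩
        · exact Or.inr ⟨r, ⟨rfl, by simpa using hnb⟩, rfl⟩
    constructor
    · rintro ⟨hs, hnb⟩
      refine ⟨?_, hnb⟩
      have : Relation.ReflTransGen (st3 b x) a c :=
        Relation.ReflTransGen.mono (fun u v h => (hbody u v).mp h) _ _ hs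
      exact Relation.ReflTransGen.mono (fun u v h => (mem_bx b x).mpr h) _ _ (part2_forward b x this)
    · rintro ⟨hs, hnb⟩
      refine ⟨?_, hnb⟩
      have hs' : Relation.ReflTransGen (st1 b x) a c :=
        Relation.ReflTransGen.mono (fun u v h => (mem_bx b x).mp h) _ _ hs
      exact Relation.ReflTransGen.mono (fun u v h => (hbody u v).mpr h) _ _ (part2_backward b x hs' hnb)
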